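/- arXiv:0809.2093 — 3 statements merged into one kernel-verified Lean document; each statement's English description precedes it below -/
import Mathlib

section
/- Let A be an m×n sign matrix (entries ±1) and let α ≥ 1. Define the α-approximation rank rk_α(A) as the minimum rank of a real matrix A' such that 1 ≤ A[i,j]·A'[i,j] ≤ α for all i,j, and define γ₂^α(A) as the minimum of γ₂(A') over the same set of matrices A', where γ₂(A') = max over unit vectors u,v of ‖A' ∘ (v uᵀ)‖_tr. Then rk_α(A) ≥ γ₂^α(A)² / α². -/
open Matrix Finset

noncomputable def traceNorm {m n : ℕ} (A : Matrix (Fin m) (Fin n) ℝ) : ℝ :=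
  ∑ i, Real.sqrt ((Matrix.isHermitian_conjTranspose_mul_self A).eigenvalues i)

noncomputable def gamma2 {m n : ℕ} (A : Matrix (Fin m) (Fin n) ℝ) : ℝ :=
  sSup { t | ∃ (u : Fin n → ℝ) (v : Fin m → ℝ), (∑ j, (u j) ^ 2 = 1) ∧ (∑ i, (v i) ^ 2 = 1) ∧
      t = traceNorm (Matrix.hadamard A (Matrix.vecMulVec v u)) }

noncomputable def approxRank {m n : ℕ} (A : Matrix (Fin m) (Fin n) ℝ) (α : ℝ) : ℕ :=
  sInf { r | ∃ B : Matrix (Fin m) (Fin n) ℝ, B.rank = r ∧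
      ∀ i j, 1 ≤ A i j * B i j ∧ A i j * B i j ≤ α }

noncomputable def gamma2Approx {m n : ℕ} (A : Matrix (Fin m) (Fin n) ℝ) (α : ℝ) : ℝ :=
  sInf { g | ∃ B : Matrix (Fin m) (Fin n) ℝ,
      (∀ i j, 1 ≤ A i j * B i j ∧ A i j * B i j ≤ α) ∧ g = gamma2 B }

lemma sum_eigs_eq_trace {n : ℕ} {M : Matrix (Fin n) (Fin n) ℝ} (hM : M.IsHermitian) :
    ∑ i, hM.eigenvalues i = M.trace := by
  rw [hM.trace_eq_sum_eigenvalues]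
  simp

lemma traceNorm_nonneg {m n : ℕ} (M : Matrix (Fin m) (Fin n) ℝ) : 0 ≤ traceNorm M :=
  Finset.sum_nonneg fun i _ => Real.sqrt_nonneg _

/-- Trace norm is at most √rank times the Frobenius norm. -/
lemma traceNorm_le_sqrt_rank_mul {m n : ℕ} (M : Matrix (Fin m) (Fin n) ℝ) :
    traceNorm M ≤ Real.sqrt M.rank * Real.sqrt (∑ i, ∑ j, M i j ^ 2) := by
  classical
  set H := Matrix.isHermitian_conjTranspose_mul_self M with hH
  set lam := H.eigenvalues with hlam
  have hnn : ∀ i, 0 ≤ lam i := fun i =>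
    Matrix.eigenvalues_conjTranspose_mul_self_nonneg M i
  have hsum : ∑ i, lam i = ∑ i, ∑ j, M i j ^ 2 := by
    rw [sum_eigs_eq_trace H]
    simp only [Matrix.trace, Matrix.diag, Matrix.mul_apply, Matrix.conjTranspose_apply,
      star_trivial]
    rw [Finset.sum_comm]
    apply Finset.sum_congr rfl
    intro i _
    apply Finset.sum_congr rfl
    intro j _
    ring
  -- the set of nonzero eigenvalues
  set s : Finset (Fin n) := Finset.univ.filter (fun i => lam i ≠ 0) with hs
  have hcard : (s.card : ℝ) = (M.rank : ℝ) := by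
    have h1 : (Mᴴ * M).rank = M.rank := Matrix.rank_conjTranspose_mul_self M
    have h2 : (Mᴴ * M).rank = Fintype.card {i // lam i ≠ 0} :=
      H.rank_eq_card_non_zero_eigs
    have h3 : Fintype.card {i // lam i ≠ 0} = s.card := by
      rw [Fintype.card_subtype]
    rw [← h1, h2, h3]
  have htr : traceNorm M = ∑ i ∈ s, Real.sqrt (lam i) := by
    show ∑ i, Real.sqrt (lam i) = _
    symm
    apply Finset.sum_subset (Finset.subset_univ s)
    intro i _ hi
    simp only [hs, Finset.mem_filter, Finset.mem_univ, true_and, not_not] at hi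
    rw [hi, Real.sqrt_zero]
  -- Cauchy-Schwarz
  have hCS : (∑ i ∈ s, Real.sqrt (lam i)) ^ 2 ≤ (s.card : ℝ) * ∑ i ∈ s, lam i := by
    have := Finset.sum_mul_sq_le_sq_mul_sq s (fun _ => (1 : ℝ)) (fun i => Real.sqrt (lam i))
    simpa [Real.sq_sqrt (hnn _), Finset.mul_sum] using this
  have hsle : ∑ i ∈ s, lam i ≤ ∑ i, ∑ j, M i j ^ 2 := by
    rw [← hsum]
    exact Finset.sum_le_sum_of_subset_of_nonneg (Finset.subset_univ s)
      (fun i _ _ => hnn i)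
  have h0 : 0 ≤ ∑ i ∈ s, Real.sqrt (lam i) :=
    Finset.sum_nonneg fun i _ => Real.sqrt_nonneg _
  rw [htr, ← Real.sqrt_mul (Nat.cast_nonneg _)]
  apply Real.le_sqrt_of_sq_le
  calc (∑ i ∈ s, Real.sqrt (lam i)) ^ 2 ≤ (s.card : ℝ) * ∑ i ∈ s, lam i := hCS
      _ ≤ (M.rank : ℝ) * ∑ i, ∑ j, M i j ^ 2 := by
          rw [← hcard]
          exact mul_le_mul_of_nonneg_left hsle (Nat.cast_nonneg _)

lemma hadamard_vecMulVec_eq {m n : ℕ} (B : Matrix (Fin m) (Fin n) ℝ)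
    (v : Fin m → ℝ) (u : Fin n → ℝ) :
    Matrix.hadamard B (Matrix.vecMulVec v u) =
      Matrix.diagonal v * B * Matrix.diagonal u := by
  ext i j
  simp [Matrix.hadamard, Matrix.vecMulVec, Matrix.mul_diagonal, Matrix.diagonal_mul]
  ring

lemma gamma2_le_sqrt_rank_mul {m n : ℕ} (B : Matrix (Fin m) (Fin n) ℝ) (α : ℝ)
    (hα : 0 ≤ α) (hB : ∀ i j, B i j ^ 2 ≤ α ^ 2) :
    gamma2 B ≤ Real.sqrt B.rank * α := by
  apply Real.sSup_le
  · rintro t ⟨u, v, hu, hv, rfl⟩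
    set M := Matrix.hadamard B (Matrix.vecMulVec v u) with hM
    have hrank : (M.rank : ℝ) ≤ (B.rank : ℝ) := by
      have : M.rank ≤ B.rank := by
        rw [hM, hadamard_vecMulVec_eq]
        calc (Matrix.diagonal v * B * Matrix.diagonal u).rank
            ≤ (Matrix.diagonal v * B).rank := Matrix.rank_mul_le_left _ _
          _ ≤ B.rank := Matrix.rank_mul_le_right _ _
      exact_mod_cast this
    have hfrob : ∑ i, ∑ j, M i j ^ 2 ≤ α ^ 2 := by
      have : ∀ i j, M i j ^ 2 = B i j ^ 2 * (v i ^ 2 * u j ^ 2) := by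
        intro i j
        simp [hM, Matrix.hadamard, Matrix.vecMulVec]
        ring
      calc ∑ i, ∑ j, M i j ^ 2
          = ∑ i, ∑ j, B i j ^ 2 * (v i ^ 2 * u j ^ 2) := by
            apply Finset.sum_congr rfl; intro i _
            apply Finset.sum_congr rfl; intro j _
            exact this i j
        _ ≤ ∑ i, ∑ j, α ^ 2 * (v i ^ 2 * u j ^ 2) := by
            apply Finset.sum_le_sum; intro i _
            apply Finset.sum_le_sum; intro j _
            exact mul_le_mul_of_nonneg_right (hB i j)
              (mul_nonneg (sq_nonneg _) (sq_nonneg _))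
        _ = α ^ 2 := by
            have e1 : (∑ i, ∑ j, α ^ 2 * (v i ^ 2 * u j ^ 2))
                = α ^ 2 * ∑ i, ∑ j, v i ^ 2 * u j ^ 2 := by
              rw [Finset.mul_sum]
              exact Finset.sum_congr rfl fun i _ => (Finset.mul_sum _ _ _).symm
            have e2 : (∑ i, ∑ j, v i ^ 2 * u j ^ 2)
                = (∑ i, v i ^ 2) * (∑ j, u j ^ 2) := by
              rw [Finset.sum_mul]
              exact Finset.sum_congr rfl fun i _ => (Finset.mul_sum _ _ _).symm
            rw [e1, e2, hu, hv]; ring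
    calc traceNorm M ≤ Real.sqrt M.rank * Real.sqrt (∑ i, ∑ j, M i j ^ 2) :=
          traceNorm_le_sqrt_rank_mul M
      _ ≤ Real.sqrt B.rank * α := by
          apply mul_le_mul
          · exact Real.sqrt_le_sqrt hrank
          · calc Real.sqrt (∑ i, ∑ j, M i j ^ 2) ≤ Real.sqrt (α ^ 2) :=
                Real.sqrt_le_sqrt hfrob
              _ = α := Real.sqrt_sq hα
          · exact Real.sqrt_nonneg _
          · exact Real.sqrt_nonneg _
  · exact mul_nonneg (Real.sqrt_nonneg _) hα

lemma gamma2_nonneg {m n : ℕ} (B : Matrix (Fin m) (Fin n) ℝ) : 0 ≤ gamma2 B := by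
  apply Real.sSup_nonneg
  rintro t ⟨u, v, _, _, rfl⟩
  exact traceNorm_nonneg _

theorem approxRank_ge_gamma2Approx_sq_div_alpha_sq {m n : ℕ}
    (A : Matrix (Fin m) (Fin n) ℝ) (hA : ∀ i j, A i j = 1 ∨ A i j = -1)
    (α : ℝ) (hα : 1 ≤ α) :
    (approxRank A α : ℝ) ≥ gamma2Approx A α ^ 2 / α ^ 2 := by
  have hα0 : (0:ℝ) ≤ α := le_trans zero_le_one hα
  have hA2 : ∀ i j, A i j * A i j = 1 := by
    intro i j; rcases hA i j with h | h <;> rw [h] <;> ring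
  have hfeasA : ∀ i j, 1 ≤ A i j * A i j ∧ A i j * A i j ≤ α := by
    intro i j; rw [hA2 i j]; exact ⟨le_refl _, hα⟩
  -- the rank set is nonempty
  have hne : {r | ∃ B : Matrix (Fin m) (Fin n) ℝ, B.rank = r ∧
      ∀ i j, 1 ≤ A i j * B i j ∧ A i j * B i j ≤ α}.Nonempty :=
    ⟨A.rank, A, rfl, hfeasA⟩
  obtain ⟨B₀, hB₀rank, hB₀feas⟩ := Nat.sInf_mem hne
  have hB₀sq : ∀ i j, B₀ i j ^ 2 ≤ α ^ 2 := by
    intro i j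
    have h1 : (A i j * B₀ i j) ^ 2 ≤ α ^ 2 := by
      have := hB₀feas i j
      nlinarith [this.1, this.2]
    calc B₀ i j ^ 2 = (A i j * B₀ i j) ^ 2 := by
          rw [mul_pow]
          rcases hA i j with h | h <;> rw [h] <;> ring
      _ ≤ α ^ 2 := h1
  have hg2 : gamma2 B₀ ≤ Real.sqrt B₀.rank * α :=
    gamma2_le_sqrt_rank_mul B₀ α hα0 hB₀sq
  have hgeA : gamma2Approx A α ≤ gamma2 B₀ := by
    apply csInf_le
    · exact ⟨0, fun g ⟨B, _, hg⟩ => hg ▸ gamma2_nonneg B⟩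
    · exact ⟨B₀, hB₀feas, rfl⟩
  have hgnn : 0 ≤ gamma2Approx A α := by
    apply Real.sInf_nonneg
    rintro g ⟨B, _, rfl⟩
    exact gamma2_nonneg B
  have hkey : gamma2Approx A α ^ 2 ≤ (approxRank A α : ℝ) * α ^ 2 := by
    have h1 : gamma2Approx A α ≤ Real.sqrt B₀.rank * α := le_trans hgeA hg2
    have h2 : gamma2Approx A α ^ 2 ≤ (Real.sqrt B₀.rank * α) ^ 2 :=
      pow_le_pow_left₀ hgnn h1 2
    calc gamma2Approx A α ^ 2 ≤ (Real.sqrt B₀.rank * α) ^ 2 := h2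
      _ = (B₀.rank : ℝ) * α ^ 2 := by
          rw [mul_pow, Real.sq_sqrt (Nat.cast_nonneg _)]
      _ = (approxRank A α : ℝ) * α ^ 2 := by
          rw [show B₀.rank = approxRank A α from hB₀rank]
  rw [ge_iff_le, div_le_iff₀ (by positivity)]
  linarith
end

section
/- For any m×n real matrix A, if A = Xᵀ Y with X a k×m matrix and Y a k×n matrix, then γ₂(A) ≤ c(X)·c(Y), where c(X) is the maximum Euclidean norm of a column of X, and γ₂(A) is defined as the maximum over unit vectors u, v of ‖A ∘ (v uᵀ)‖_tr. -/
open Matrix Finset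

lemma traceNorm_transpose_mul_le {k m n : ℕ}
    (P : Matrix (Fin k) (Fin m) ℝ) (Q : Matrix (Fin k) (Fin n) ℝ) :
    traceNorm (Pᵀ * Q) ≤
      Real.sqrt (∑ i, ∑ j, (P i j) ^ 2) * Real.sqrt (∑ i, ∑ j, (Q i j) ^ 2) := by
  classical
  set B := Pᵀ * Q with hBdef
  have h1 : ∀ x y : Fin n → ℝ, x ⬝ᵥ ((Bᴴ * B) *ᵥ y) = (B *ᵥ x) ⬝ᵥ (B *ᵥ y) := by
    intro x y
    rw [Matrix.conjTranspose_eq_transpose_of_trivial, ← Matrix.mulVec_mulVec,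
      Matrix.dotProduct_mulVec, Matrix.vecMul_transpose]
  set hH := Matrix.isHermitian_conjTranspose_mul_self B with hHdef
  set lam := hH.eigenvalues with hlamdef
  set V : Fin n → (Fin n → ℝ) := fun j => ⇑(hH.eigenvectorBasis j) with hVdef
  have hkey : ∀ i j, (B *ᵥ V i) ⬝ᵥ (B *ᵥ V j) = lam j * (if i = j then 1 else 0) := by
    intro i j
    rw [← h1, hH.mulVec_eigenvectorBasis j]
    have horth := orthonormal_iff_ite.mp hH.eigenvectorBasis.orthonormal i j
    simp only [PiLp.inner_apply, RCLike.inner_apply, conj_trivial] at horth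
    simp only [hVdef, dotProduct, Pi.smul_apply, smul_eq_mul]
    rw [show (∑ x, hH.eigenvectorBasis i x * (lam j * hH.eigenvectorBasis j x))
        = lam j * ∑ x, hH.eigenvectorBasis i x * hH.eigenvectorBasis j x from by
      rw [Finset.mul_sum]; exact Finset.sum_congr rfl fun _ _ => by ring]
    congr 1; rw [← horth]; exact Finset.sum_congr rfl fun _ _ => mul_comm _ _
  have hlam0 : ∀ j, 0 ≤ lam j := by
    intro j
    have h := hkey j j
    have hnn : 0 ≤ (B *ᵥ V j) ⬝ᵥ (B *ᵥ V j) :=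
      Finset.sum_nonneg fun r _ => mul_self_nonneg _
    rw [h] at hnn
    simpa using hnn
  have htn : traceNorm B = ∑ j, Real.sqrt (lam j) := rfl
  set s : Finset (Fin n) := Finset.univ.filter (fun j => lam j ≠ 0) with hsdef
  have hmem : ∀ j ∈ s, lam j ≠ 0 := fun j hj => (Finset.mem_filter.mp hj).2
  have hsqrtpos : ∀ j ∈ s, 0 < Real.sqrt (lam j) := fun j hj =>
    Real.sqrt_pos.mpr (lt_of_le_of_ne (hlam0 j) (Ne.symm (hmem j hj)))
  have hsum0 : ∑ j, Real.sqrt (lam j) = ∑ j ∈ s, Real.sqrt (lam j) := by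
    symm
    apply Finset.sum_filter_of_ne
    intro j _ hne hlj
    exact hne (by rw [hlj, Real.sqrt_zero])
  set w : Fin n → (Fin m → ℝ) := fun j => (Real.sqrt (lam j))⁻¹ • (B *ᵥ V j) with hwdef
  have hwdot : ∀ i j, w i ⬝ᵥ w j
      = (Real.sqrt (lam i))⁻¹ * ((Real.sqrt (lam j))⁻¹ * (lam j * if i = j then 1 else 0)) := by
    intro i j
    rw [hwdef]
    simp only [smul_dotProduct, dotProduct_smul, smul_eq_mul, hkey]
    ring
  -- orthonormal family from w on s
  set ws : {j // j ∈ s} → EuclideanSpace ℝ (Fin m) :=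
    fun j => (WithLp.equiv 2 (Fin m → ℝ)).symm (w j.1) with hwsdef
  have hws : Orthonormal ℝ ws := by
    rw [orthonormal_iff_ite]
    intro i j
    have : (inner ℝ (ws i) (ws j) : ℝ) = w i.1 ⬝ᵥ w j.1 := by
      simp [hwsdef, PiLp.inner_apply, RCLike.inner_apply, dotProduct,
        WithLp.equiv_symm_apply, WithLp.ofLp_toLp]
      exact Finset.sum_congr rfl fun _ _ => mul_comm _ _
    rw [this, hwdot]
    by_cases h : i = j
    · subst h
      have hl := Real.mul_self_sqrt (hlam0 i.1)
      have hp := hsqrtpos i.1 i.2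
      simp only [if_pos rfl]
      simp only [eq_self_iff_true, if_true, mul_one]
      field_simp
      rw [sq, hl]
    · rw [if_neg h, if_neg (fun hc => h (Subtype.ext hc)), mul_zero, mul_zero, mul_zero]
  -- Bessel bounds
  have hbesselP : ∀ r : Fin k, ∑ j ∈ s, (∑ t, P r t * w j t) ^ 2 ≤ ∑ t, (P r t) ^ 2 := by
    intro r
    have hb := hws.sum_inner_products_le (s := Finset.univ)
      ((WithLp.equiv 2 (Fin m → ℝ)).symm (P r))
    have e1 : ∀ j : {j // j ∈ s}, (inner ℝ (ws j) ((WithLp.equiv 2 (Fin m → ℝ)).symm (P r)) : ℝ)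
        = ∑ t, P r t * w j.1 t := by
      intro j
      simp only [hwsdef, PiLp.inner_apply, RCLike.inner_apply, conj_trivial,
        WithLp.equiv_symm_apply, WithLp.ofLp_toLp]
    have e2 : (‖(WithLp.equiv 2 (Fin m → ℝ)).symm (P r)‖ : ℝ) ^ 2 = ∑ t, (P r t) ^ 2 := by
      rw [← real_inner_self_eq_norm_sq]
      simp only [PiLp.inner_apply, RCLike.inner_apply, conj_trivial,
        WithLp.equiv_symm_apply, WithLp.ofLp_toLp]
      exact Finset.sum_congr rfl fun t _ => by ring
    calc ∑ j ∈ s, (∑ t, P r t * w j t) ^ 2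
        = ∑ j : {j // j ∈ s}, (∑ t, P r t * w j.1 t) ^ 2 := by
          rw [← Finset.sum_coe_sort s (fun j => (∑ t, P r t * w j t) ^ 2)]
      _ = ∑ j : {j // j ∈ s}, ‖(inner ℝ (ws j) ((WithLp.equiv 2 (Fin m → ℝ)).symm (P r)) : ℝ)‖ ^ 2 := by
          refine Finset.sum_congr rfl fun j _ => ?_
          rw [e1, Real.norm_eq_abs, sq_abs]
      _ ≤ ‖(WithLp.equiv 2 (Fin m → ℝ)).symm (P r)‖ ^ 2 := hb
      _ = ∑ t, (P r t) ^ 2 := e2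
  have hbesselQ : ∀ r : Fin k, ∑ j ∈ s, (∑ t, Q r t * V j t) ^ 2 ≤ ∑ t, (Q r t) ^ 2 := by
    intro r
    have hb := hH.eigenvectorBasis.orthonormal.sum_inner_products_le (s := s)
      ((WithLp.equiv 2 (Fin n → ℝ)).symm (Q r))
    have e1 : ∀ j : Fin n, (inner ℝ (hH.eigenvectorBasis j) ((WithLp.equiv 2 (Fin n → ℝ)).symm (Q r)) : ℝ)
        = ∑ t, Q r t * V j t := by
      intro j
      simp only [hVdef, PiLp.inner_apply, RCLike.inner_apply, conj_trivial,
        WithLp.equiv_symm_apply, WithLp.ofLp_toLp]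
    have e2 : (‖(WithLp.equiv 2 (Fin n → ℝ)).symm (Q r)‖ : ℝ) ^ 2 = ∑ t, (Q r t) ^ 2 := by
      rw [← real_inner_self_eq_norm_sq]
      simp only [PiLp.inner_apply, RCLike.inner_apply, conj_trivial,
        WithLp.equiv_symm_apply, WithLp.ofLp_toLp]
      exact Finset.sum_congr rfl fun t _ => by ring
    calc ∑ j ∈ s, (∑ t, Q r t * V j t) ^ 2
        = ∑ j ∈ s, ‖(inner ℝ (hH.eigenvectorBasis j) ((WithLp.equiv 2 (Fin n → ℝ)).symm (Q r)) : ℝ)‖ ^ 2 := by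
          refine Finset.sum_congr rfl fun j _ => ?_
          rw [e1, Real.norm_eq_abs, sq_abs]
      _ ≤ ‖(WithLp.equiv 2 (Fin n → ℝ)).symm (Q r)‖ ^ 2 := hb
      _ = ∑ t, (Q r t) ^ 2 := e2
  -- main expression of sqrt lam as inner product
  have hmain : ∀ j ∈ s, Real.sqrt (lam j) = (P *ᵥ w j) ⬝ᵥ (Q *ᵥ V j) := by
    intro j hj
    have h3 : w j ⬝ᵥ (B *ᵥ V j) = (P *ᵥ w j) ⬝ᵥ (Q *ᵥ V j) := by
      rw [hBdef, ← Matrix.mulVec_mulVec, Matrix.dotProduct_mulVec, Matrix.vecMul_transpose]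
    have h2 : w j ⬝ᵥ (B *ᵥ V j) = (Real.sqrt (lam j))⁻¹ * lam j := by
      rw [hwdef]
      simp only [smul_dotProduct, smul_eq_mul]
      rw [hkey j j, if_pos rfl, mul_one]
    rw [← h3, h2]
    have hl := Real.mul_self_sqrt (hlam0 j)
    have hp := hsqrtpos j hj
    field_simp
    rw [sq, hl]
  -- chain of inequalities
  have step1 : traceNorm B = ∑ j ∈ s, (P *ᵥ w j) ⬝ᵥ (Q *ᵥ V j) := by
    rw [htn, hsum0]
    exact Finset.sum_congr rfl hmain
  have step2 : ∀ j, (P *ᵥ w j) ⬝ᵥ (Q *ᵥ V j)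
      ≤ Real.sqrt (∑ r, ((P *ᵥ w j) r) ^ 2) * Real.sqrt (∑ r, ((Q *ᵥ V j) r) ^ 2) := by
    intro j
    exact Real.sum_mul_le_sqrt_mul_sqrt Finset.univ _ _
  have step3 : ∑ j ∈ s, Real.sqrt (∑ r, ((P *ᵥ w j) r) ^ 2) * Real.sqrt (∑ r, ((Q *ᵥ V j) r) ^ 2)
      ≤ Real.sqrt (∑ j ∈ s, ∑ r, ((P *ᵥ w j) r) ^ 2) * Real.sqrt (∑ j ∈ s, ∑ r, ((Q *ᵥ V j) r) ^ 2) :=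
    Real.sum_sqrt_mul_sqrt_le s (fun j => Finset.sum_nonneg fun r _ => sq_nonneg _)
      (fun j => Finset.sum_nonneg fun r _ => sq_nonneg _)
  have boundP : ∑ j ∈ s, ∑ r, ((P *ᵥ w j) r) ^ 2 ≤ ∑ i, ∑ j, (P i j) ^ 2 := by
    rw [Finset.sum_comm]
    apply Finset.sum_le_sum
    intro r _
    have := hbesselP r
    simpa only [Matrix.mulVec, dotProduct] using this
  have boundQ : ∑ j ∈ s, ∑ r, ((Q *ᵥ V j) r) ^ 2 ≤ ∑ i, ∑ j, (Q i j) ^ 2 := by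
    rw [Finset.sum_comm]
    apply Finset.sum_le_sum
    intro r _
    have := hbesselQ r
    simpa only [Matrix.mulVec, dotProduct] using this
  calc traceNorm B = ∑ j ∈ s, (P *ᵥ w j) ⬝ᵥ (Q *ᵥ V j) := step1
    _ ≤ ∑ j ∈ s, Real.sqrt (∑ r, ((P *ᵥ w j) r) ^ 2) * Real.sqrt (∑ r, ((Q *ᵥ V j) r) ^ 2) :=
        Finset.sum_le_sum fun j _ => step2 j
    _ ≤ Real.sqrt (∑ j ∈ s, ∑ r, ((P *ᵥ w j) r) ^ 2) * Real.sqrt (∑ j ∈ s, ∑ r, ((Q *ᵥ V j) r) ^ 2) := step3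
    _ ≤ Real.sqrt (∑ i, ∑ j, (P i j) ^ 2) * Real.sqrt (∑ i, ∑ j, (Q i j) ^ 2) :=
        mul_le_mul (Real.sqrt_le_sqrt boundP) (Real.sqrt_le_sqrt boundQ)
          (Real.sqrt_nonneg _) (Real.sqrt_nonneg _)

lemma sqrt_sum_scaled_le {k m : ℕ} (X : Matrix (Fin k) (Fin m) ℝ) (v : Fin m → ℝ)
    (hv : ∑ j, (v j) ^ 2 = 1) :
    Real.sqrt (∑ i, ∑ j, (X i j * v j) ^ 2) ≤ ⨆ j, Real.sqrt (∑ i, (X i j) ^ 2) := by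
  set c := ⨆ j, Real.sqrt (∑ i, (X i j) ^ 2) with hc
  have hc0 : 0 ≤ c := Real.iSup_nonneg fun j => Real.sqrt_nonneg _
  have key : ∑ i, ∑ j, (X i j * v j) ^ 2 ≤ c ^ 2 := by
    rw [Finset.sum_comm]
    calc ∑ j, ∑ i, (X i j * v j) ^ 2 = ∑ j, (v j) ^ 2 * ∑ i, (X i j) ^ 2 := by
          refine Finset.sum_congr rfl fun j _ => ?_
          rw [Finset.mul_sum]
          exact Finset.sum_congr rfl fun i _ => by ring
      _ ≤ ∑ j, (v j) ^ 2 * c ^ 2 := by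
          refine Finset.sum_le_sum fun j _ => ?_
          have h1 : Real.sqrt (∑ i, (X i j) ^ 2) ≤ c :=
            le_ciSup (f := fun j => Real.sqrt (∑ i, (X i j) ^ 2)) (Set.Finite.bddAbove (Set.finite_range _)) j
          have h2 : ∑ i, (X i j) ^ 2 ≤ c ^ 2 := by
            rw [← Real.sq_sqrt (Finset.sum_nonneg fun i _ => sq_nonneg _)]
            exact pow_le_pow_left₀ (Real.sqrt_nonneg _) h1 2
          exact mul_le_mul_of_nonneg_left h2 (sq_nonneg _)
      _ = c ^ 2 := by rw [← Finset.sum_mul, hv, one_mul]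
  calc Real.sqrt (∑ i, ∑ j, (X i j * v j) ^ 2) ≤ Real.sqrt (c ^ 2) := Real.sqrt_le_sqrt key
    _ = c := Real.sqrt_sq hc0

theorem gamma2_le_factorization {k m n : ℕ}
    (A : Matrix (Fin m) (Fin n) ℝ)
    (X : Matrix (Fin k) (Fin m) ℝ) (Y : Matrix (Fin k) (Fin n) ℝ)
    (hXY : Xᵀ * Y = A) :
    gamma2 A ≤ (⨆ j, Real.sqrt (∑ i, (X i j) ^ 2)) * (⨆ j, Real.sqrt (∑ i, (Y i j) ^ 2)) := by
  classical
  have hcX0 : 0 ≤ ⨆ j, Real.sqrt (∑ i, (X i j) ^ 2) :=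
    Real.iSup_nonneg fun j => Real.sqrt_nonneg _
  have hcY0 : 0 ≤ ⨆ j, Real.sqrt (∑ i, (Y i j) ^ 2) :=
    Real.iSup_nonneg fun j => Real.sqrt_nonneg _
  apply Real.sSup_le
  · rintro t ⟨u, v, hu, hv, rfl⟩
    set P : Matrix (Fin k) (Fin m) ℝ := Matrix.of (fun i j => X i j * v j) with hP
    set Q : Matrix (Fin k) (Fin n) ℝ := Matrix.of (fun i j => Y i j * u j) with hQ
    have hAd : Matrix.hadamard A (Matrix.vecMulVec v u) = Pᵀ * Q := by
      ext a b
      simp only [Matrix.hadamard_apply, Matrix.vecMulVec_apply, ← hXY, Matrix.mul_apply,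
        Matrix.transpose_apply, Matrix.of_apply, hP, hQ]
      rw [Finset.sum_mul]
      exact Finset.sum_congr rfl fun i _ => by ring
    rw [hAd]
    refine (traceNorm_transpose_mul_le P Q).trans
      (mul_le_mul ?_ ?_ (Real.sqrt_nonneg _) hcX0)
    · exact sqrt_sum_scaled_le X v hv
    · exact sqrt_sum_scaled_le Y u hu
  · exact mul_nonneg hcX0 hcY0
end

section
/- For any real matrix A, γ₂(A) ≤ ν(A), where γ₂(A) = max over unit vectors u,v of ‖A ∘ (v uᵀ)‖_tr and ν(A) = min Σᵢ|cᵢ| over representations A = Σᵢ cᵢ xᵢyᵢᵀ with xᵢ, yᵢ sign vectors. -/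
open Matrix Finset
open scoped RealInnerProductSpace

noncomputable def nu {m n : ℕ} (B : Matrix (Fin m) (Fin n) ℝ) : ℝ :=
  sInf { s | ∃ (k : ℕ) (c : Fin k → ℝ) (x : Fin k → Fin m → ℝ) (y : Fin k → Fin n → ℝ),
      (∀ i j, x i j = 1 ∨ x i j = -1) ∧ (∀ i j, y i j = 1 ∨ y i j = -1) ∧
      B = ∑ i, c i • Matrix.vecMulVec (x i) (y i) ∧ s = ∑ i, |c i| }

lemma bessel_aux {ι E : Type*} [Fintype ι] [NormedAddCommGroup E] [InnerProductSpace ℝ E]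
    (g : ι → E) (horth : ∀ i j, i ≠ j → ⟪g i, g j⟫ = 0) (hle : ∀ i, ‖g i‖ ≤ 1) (a : E) :
    ∑ i, ⟪g i, a⟫ ^ 2 ≤ ‖a‖ ^ 2 := by
  classical
  set v : {i // g i ≠ 0} → E := fun i => (‖g i.1‖⁻¹ : ℝ) • g i.1 with hv
  have hvon : Orthonormal ℝ v := by
    rw [orthonormal_iff_ite]
    intro i j
    by_cases hij : i = j
    · subst hij
      simp only [hv, real_inner_smul_left, real_inner_smul_right, if_pos rfl, if_true]
      rw [real_inner_self_eq_norm_sq]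
      have h0 : ‖g i.1‖ ≠ 0 := norm_ne_zero_iff.mpr i.2
      field_simp
    · have : i.1 ≠ j.1 := fun h => hij (Subtype.ext h)
      simp only [hv, real_inner_smul_left, real_inner_smul_right, if_neg hij,
        horth _ _ this, mul_zero]
  have key : ∑ i : {i // g i ≠ 0}, ⟪g i.1, a⟫ ^ 2 ≤ ‖a‖ ^ 2 := by
    have h1 : ∀ i : {i // g i ≠ 0}, ⟪g i.1, a⟫ ^ 2 ≤ ‖⟪v i, a⟫‖ ^ 2 := by
      intro i
      have h0 : (0:ℝ) < ‖g i.1‖ := norm_pos_iff.mpr i.2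
      have : ⟪g i.1, a⟫ = ‖g i.1‖ * ⟪v i, a⟫ := by
        simp only [hv, real_inner_smul_left]
        field_simp
      rw [this, Real.norm_eq_abs, sq_abs, mul_pow]
      have hb : ‖g i.1‖ ^ 2 ≤ 1 := by
        have := hle i.1
        nlinarith
      nlinarith [sq_nonneg (⟪v i, a⟫ : ℝ)]
    calc ∑ i : {i // g i ≠ 0}, ⟪g i.1, a⟫ ^ 2 ≤ ∑ i : {i // g i ≠ 0}, ‖⟪v i, a⟫‖ ^ 2 :=
          Finset.sum_le_sum fun i _ => h1 i
      _ ≤ ‖a‖ ^ 2 := hvon.sum_inner_products_le a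
  have hsplit : ∑ i, ⟪g i, a⟫ ^ 2 = ∑ i : {i // g i ≠ 0}, ⟪g i.1, a⟫ ^ 2 := by
    rw [← Finset.sum_subtype (Finset.univ.filter (fun i => g i ≠ 0))
      (by simp) (fun i => (⟪g i, a⟫:ℝ) ^ 2)]
    rw [Finset.sum_filter_of_ne]
    intro x _ hx
    intro hgx
    apply hx
    rw [hgx, inner_zero_left]
    norm_num
  rw [hsplit]
  exact key

lemma dot_sum' {m k : ℕ} (z : Fin m → ℝ) (v : Fin k → Fin m → ℝ) :
    z ⬝ᵥ (∑ i, v i) = ∑ i, z ⬝ᵥ v i := by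
  simp only [dotProduct, Finset.sum_apply, Finset.mul_sum]
  exact Finset.sum_comm

lemma sum_mulVec' {m n k : ℕ} (A : Fin k → Matrix (Fin m) (Fin n) ℝ) (x : Fin n → ℝ) :
    (∑ i, A i) *ᵥ x = ∑ i, A i *ᵥ x := by
  funext p
  simp only [Matrix.mulVec, dotProduct, Matrix.sum_apply, Finset.sum_apply,
    Finset.sum_mul]
  exact Finset.sum_comm

lemma dot_rank1 {m n : ℕ} (aa : Fin m → ℝ) (bb : Fin n → ℝ) (z : Fin m → ℝ) (x : Fin n → ℝ) :
    z ⬝ᵥ (Matrix.vecMulVec aa bb *ᵥ x) = (z ⬝ᵥ aa) * (bb ⬝ᵥ x) := by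
  simp only [dotProduct, Matrix.mulVec, Matrix.vecMulVec_apply, Finset.mul_sum,
    Finset.sum_mul]
  rw [Finset.sum_comm]
  refine Finset.sum_congr rfl fun q _ => Finset.sum_congr rfl fun p _ => by ring

lemma traceNorm_rep_le {m n k : ℕ} (M : Matrix (Fin m) (Fin n) ℝ)
    (c : Fin k → ℝ) (a : Fin k → Fin m → ℝ) (b : Fin k → Fin n → ℝ)
    (hM : M = ∑ i, c i • Matrix.vecMulVec (a i) (b i)) :
    traceNorm M ≤ ∑ i, |c i| * Real.sqrt (∑ j, a i j ^ 2) * Real.sqrt (∑ j, b i j ^ 2) := by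
  classical
  set hH := Matrix.isHermitian_conjTranspose_mul_self M with hHdef
  set w := hH.eigenvectorBasis with hwdef
  have hdotMM : ∀ (x y : Fin n → ℝ), (M *ᵥ x) ⬝ᵥ (M *ᵥ y) = x ⬝ᵥ ((Mᴴ * M) *ᵥ y) := by
    intro x y
    rw [Matrix.dotProduct_mulVec, Matrix.vecMul_mulVec, ← Matrix.dotProduct_mulVec,
      Matrix.conjTranspose_eq_transpose_of_trivial]
  have hip : ∀ {N : ℕ} (x y : EuclideanSpace ℝ (Fin N)), ⟪x, y⟫ = (x : Fin N → ℝ) ⬝ᵥ (y : Fin N → ℝ) := by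
    intro N x y
    simp [PiLp.inner_apply, dotProduct, mul_comm]
  set F : Fin n → EuclideanSpace ℝ (Fin m) :=
    fun j => (WithLp.equiv 2 (Fin m → ℝ)).symm (M *ᵥ (w j)) with hFdef
  have hFfun : ∀ j, (F j : Fin m → ℝ) = M *ᵥ (w j) := fun j => rfl
  have hww : ∀ j l, ⟪w j, w l⟫ = if j = l then (1:ℝ) else 0 := by
    intro j l
    exact orthonormal_iff_ite.mp w.orthonormal j l
  have horthF : ∀ j l, ⟪F j, F l⟫ = hH.eigenvalues l * ⟪w j, w l⟫ := by
    intro j l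
    have hev : (Mᴴ * M) *ᵥ (w l : Fin n → ℝ) = hH.eigenvalues l • (w l : Fin n → ℝ) :=
      hH.mulVec_eigenvectorBasis l
    rw [hip, hFfun, hFfun, hdotMM, hev, dotProduct_smul, hip]
    rfl
  have heig : ∀ j, hH.eigenvalues j = ‖F j‖ ^ 2 := by
    intro j
    have := horthF j j
    rw [hww, if_pos rfl, mul_one, real_inner_self_eq_norm_sq] at this
    exact this.symm
  have htrace : traceNorm M = ∑ j, ‖F j‖ := by
    unfold traceNorm
    refine Finset.sum_congr rfl fun j _ => ?_
    have h := heig j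
    rw [hHdef] at h
    rw [h, Real.sqrt_sq (norm_nonneg _)]
  set g : Fin n → EuclideanSpace ℝ (Fin m) := fun j => (‖F j‖⁻¹ : ℝ) • F j with hgdef
  have hgF : ∀ j, ⟪g j, F j⟫ = ‖F j‖ := by
    intro j
    rw [hgdef]
    simp only [real_inner_smul_left, real_inner_self_eq_norm_sq]
    by_cases h : ‖F j‖ = 0
    · simp [h]
    · field_simp
  have horthg : ∀ i j, i ≠ j → ⟪g i, g j⟫ = 0 := by
    intro i j hij
    rw [hgdef]
    simp only [real_inner_smul_left, real_inner_smul_right]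
    rw [horthF, hww, if_neg hij, mul_zero, mul_zero, mul_zero]
  have hgle : ∀ j, ‖g j‖ ≤ 1 := by
    intro j
    rw [hgdef]
    simp only [norm_smul, norm_inv, norm_norm]
    by_cases h : ‖F j‖ = 0
    · simp [h]
    · rw [inv_mul_cancel₀ h]
  have hdotM : ∀ (z : Fin m → ℝ) (x : Fin n → ℝ),
      z ⬝ᵥ (M *ᵥ x) = ∑ i, c i * (z ⬝ᵥ a i) * (b i ⬝ᵥ x) := by
    intro z x
    rw [hM, sum_mulVec', dot_sum']
    refine Finset.sum_congr rfl fun i _ => ?_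
    rw [Matrix.smul_mulVec, dotProduct_smul, smul_eq_mul, dot_rank1]
    ring
  have hmain : traceNorm M = ∑ i, c i * ∑ j, ((g j : Fin m → ℝ) ⬝ᵥ a i) * (b i ⬝ᵥ (w j : Fin n → ℝ)) := by
    rw [htrace]
    have h1 : ∀ j, ‖F j‖ = ∑ i, c i * ((g j : Fin m → ℝ) ⬝ᵥ a i) * (b i ⬝ᵥ (w j : Fin n → ℝ)) := by
      intro j
      rw [← hgF j, hip, hFfun, hdotM]
    rw [Finset.sum_congr rfl fun j _ => h1 j, Finset.sum_comm]
    refine Finset.sum_congr rfl fun i _ => ?_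
    rw [Finset.mul_sum]
    refine Finset.sum_congr rfl fun j _ => ?_
    ring
  rw [hmain]
  refine Finset.sum_le_sum fun i _ => ?_
  set S := ∑ j, ((g j : Fin m → ℝ) ⬝ᵥ a i) * (b i ⬝ᵥ (w j : Fin n → ℝ)) with hSdef
  have hA : ∑ j, ((g j : Fin m → ℝ) ⬝ᵥ a i) ^ 2 ≤ ∑ p, a i p ^ 2 := by
    have hb := bessel_aux g horthg hgle ((WithLp.equiv 2 (Fin m → ℝ)).symm (a i))
    have hnorm : ‖(WithLp.equiv 2 (Fin m → ℝ)).symm (a i)‖ ^ 2 = ∑ p, a i p ^ 2 := by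
      rw [EuclideanSpace.norm_eq, Real.sq_sqrt (Finset.sum_nonneg fun p _ => sq_nonneg _)]
      refine Finset.sum_congr rfl fun p _ => ?_
      rw [Real.norm_eq_abs, sq_abs]
      rfl
    rw [hnorm] at hb
    refine le_trans (le_of_eq ?_) hb
    refine Finset.sum_congr rfl fun j _ => ?_
    rw [hip]
    rfl
  have hB : ∑ j, (b i ⬝ᵥ (w j : Fin n → ℝ)) ^ 2 ≤ ∑ q, b i q ^ 2 := by
    have horthw : ∀ j l, j ≠ l → ⟪w j, w l⟫ = 0 := by
      intro j l hjl; rw [hww, if_neg hjl]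
    have hwle : ∀ j, ‖w j‖ ≤ 1 := fun j => le_of_eq (w.orthonormal.1 j)
    have hb := bessel_aux (fun j => w j) (fun j l h => horthw j l h) hwle
      ((WithLp.equiv 2 (Fin n → ℝ)).symm (b i))
    have hnorm : ‖(WithLp.equiv 2 (Fin n → ℝ)).symm (b i)‖ ^ 2 = ∑ q, b i q ^ 2 := by
      rw [EuclideanSpace.norm_eq, Real.sq_sqrt (Finset.sum_nonneg fun p _ => sq_nonneg _)]
      refine Finset.sum_congr rfl fun p _ => ?_
      rw [Real.norm_eq_abs, sq_abs]
      rfl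
    rw [hnorm] at hb
    refine le_trans (le_of_eq ?_) hb
    refine Finset.sum_congr rfl fun j _ => ?_
    rw [hip, dotProduct_comm]
    rfl
  have hCS : |S| ≤ Real.sqrt (∑ p, a i p ^ 2) * Real.sqrt (∑ q, b i q ^ 2) := by
    have h1 : |S| ≤ ∑ j, |((g j : Fin m → ℝ) ⬝ᵥ a i)| * |(b i ⬝ᵥ (w j : Fin n → ℝ))| := by
      rw [hSdef]
      refine le_trans (Finset.abs_sum_le_sum_abs _ _) ?_
      refine Finset.sum_le_sum fun j _ => le_of_eq (abs_mul _ _)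
    have h2 : ∑ j, |((g j : Fin m → ℝ) ⬝ᵥ a i)| * |(b i ⬝ᵥ (w j : Fin n → ℝ))| ≤
        Real.sqrt (∑ j, ((g j : Fin m → ℝ) ⬝ᵥ a i) ^ 2) *
        Real.sqrt (∑ j, (b i ⬝ᵥ (w j : Fin n → ℝ)) ^ 2) := by
      have h3 := Real.sum_mul_le_sqrt_mul_sqrt Finset.univ
        (fun j => |((g j : Fin m → ℝ) ⬝ᵥ a i)|) (fun j => |(b i ⬝ᵥ (w j : Fin n → ℝ))|)
      simpa [sq_abs] using h3
    refine le_trans h1 (le_trans h2 ?_)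
    exact mul_le_mul (Real.sqrt_le_sqrt hA) (Real.sqrt_le_sqrt hB)
      (Real.sqrt_nonneg _) (Real.sqrt_nonneg _)
  calc c i * S ≤ |c i * S| := le_abs_self _
    _ = |c i| * |S| := abs_mul _ _
    _ ≤ |c i| * (Real.sqrt (∑ p, a i p ^ 2) * Real.sqrt (∑ q, b i q ^ 2)) :=
        mul_le_mul_of_nonneg_left hCS (abs_nonneg _)
    _ = |c i| * Real.sqrt (∑ p, a i p ^ 2) * Real.sqrt (∑ q, b i q ^ 2) := by ring


lemma hadamard_rep {m n k : ℕ} (c : Fin k → ℝ) (x : Fin k → Fin m → ℝ) (y : Fin k → Fin n → ℝ)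
    (v : Fin m → ℝ) (u : Fin n → ℝ) :
    Matrix.hadamard (∑ i, c i • Matrix.vecMulVec (x i) (y i)) (Matrix.vecMulVec v u)
      = ∑ i, c i • Matrix.vecMulVec (fun p => x i p * v p) (fun q => y i q * u q) := by
  ext p q
  simp only [Matrix.hadamard_apply, Matrix.sum_apply, Matrix.smul_apply, Matrix.vecMulVec_apply,
    smul_eq_mul, Finset.sum_mul]
  refine Finset.sum_congr rfl fun i _ => by ring

lemma exists_sign_rep {m n : ℕ} (A : Matrix (Fin m) (Fin n) ℝ) :
    ∃ (k : ℕ) (c : Fin k → ℝ) (x : Fin k → Fin m → ℝ) (y : Fin k → Fin n → ℝ),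
      (∀ i j, x i j = 1 ∨ x i j = -1) ∧ (∀ i j, y i j = 1 ∨ y i j = -1) ∧
      A = ∑ i, c i • Matrix.vecMulVec (x i) (y i) := by
  classical
  set e : ((Fin m × Fin n) × Fin 4) ≃ Fin (m * n * 4) :=
    (Equiv.prodCongr finProdFinEquiv (Equiv.refl (Fin 4))).trans finProdFinEquiv with hedef
  set C : (Fin m × Fin n) × Fin 4 → ℝ := fun p => A p.1.1 p.1.2 / 4 with hC
  set X : (Fin m × Fin n) × Fin 4 → Fin m → ℝ :=
    fun p q => if p.2 = 0 ∨ p.2 = 1 then (if q = p.1.1 then 1 else -1) else 1 with hX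
  set Y : (Fin m × Fin n) × Fin 4 → Fin n → ℝ :=
    fun p q => if p.2 = 0 ∨ p.2 = 2 then (if q = p.1.2 then 1 else -1) else 1 with hY
  refine ⟨m * n * 4, C ∘ e.symm, X ∘ e.symm, Y ∘ e.symm, ?_, ?_, ?_⟩
  · intro i j
    simp only [Function.comp_apply, hX]
    split_ifs <;> simp
  · intro i j
    simp only [Function.comp_apply, hY]
    split_ifs <;> simp
  · have hsum : ∑ i : Fin (m*n*4), (C ∘ e.symm) i • Matrix.vecMulVec ((X ∘ e.symm) i) ((Y ∘ e.symm) i)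
        = ∑ p : (Fin m × Fin n) × Fin 4, C p • Matrix.vecMulVec (X p) (Y p) :=
      Equiv.sum_comp e.symm (fun p => C p • Matrix.vecMulVec (X p) (Y p))
    rw [hsum]
    ext p0 q0
    rw [Matrix.sum_apply]
    rw [Fintype.sum_prod_type]
    have key : ∀ z : Fin m × Fin n,
        (∑ t : Fin 4, (C (z, t) • Matrix.vecMulVec (X (z, t)) (Y (z, t))) p0 q0)
          = (A z.1 z.2 / 4) *
            (((if p0 = z.1 then (1:ℝ) else -1) + 1) * ((if q0 = z.2 then (1:ℝ) else -1) + 1)) := by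
      intro z
      simp only [Fin.sum_univ_four, hC, hX, hY, Matrix.smul_apply, Matrix.vecMulVec_apply,
        smul_eq_mul]
      norm_num [Fin.ext_iff, show ((3:Fin 4):ℕ)=3 from rfl, show ((2:Fin 4):ℕ)=2 from rfl]
      split_ifs <;> ring
    rw [Finset.sum_congr rfl fun z _ => key z]
    rw [Finset.sum_eq_single (p0, q0)]
    · simp
      norm_num
    · intro z _ hz
      by_cases h1 : p0 = z.1
      · have h2 : ¬ (q0 = z.2) := by
          intro h2
          apply hz
          rw [Prod.ext_iff]
          exact ⟨h1.symm, h2.symm⟩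
        simp [h2]
      · simp [h1]
    · intro h
      exact absurd (Finset.mem_univ _) h


theorem gamma2_le_nu {m n : ℕ} (A : Matrix (Fin m) (Fin n) ℝ) :
    gamma2 A ≤ nu A := by
  classical
  unfold gamma2 nu
  have hTne : Set.Nonempty { s | ∃ (k : ℕ) (c : Fin k → ℝ) (x : Fin k → Fin m → ℝ)
      (y : Fin k → Fin n → ℝ),
      (∀ i j, x i j = 1 ∨ x i j = -1) ∧ (∀ i j, y i j = 1 ∨ y i j = -1) ∧
      A = ∑ i, c i • Matrix.vecMulVec (x i) (y i) ∧ s = ∑ i, |c i| } := by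
    obtain ⟨k, c, x, y, hx, hy, hA⟩ := exists_sign_rep A
    exact ⟨∑ i, |c i|, k, c, x, y, hx, hy, hA, rfl⟩
  apply Real.sSup_le
  · rintro t ⟨u, v, hu, hv, rfl⟩
    apply le_csInf hTne
    rintro s ⟨k, c, x, y, hx, hy, hA, rfl⟩
    have hrep : Matrix.hadamard A (Matrix.vecMulVec v u)
        = ∑ i, c i • Matrix.vecMulVec (fun p => x i p * v p) (fun q => y i q * u q) := by
      rw [hA]; exact hadamard_rep c x y v u
    refine le_trans (traceNorm_rep_le _ c _ _ hrep) (le_of_eq ?_)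
    refine Finset.sum_congr rfl fun i _ => ?_
    have hxs : ∑ p, (x i p * v p) ^ 2 = 1 := by
      rw [← hv]
      refine Finset.sum_congr rfl fun p _ => ?_
      rcases hx i p with h | h <;> rw [h] <;> ring
    have hys : ∑ q, (y i q * u q) ^ 2 = 1 := by
      rw [← hu]
      refine Finset.sum_congr rfl fun q _ => ?_
      rcases hy i q with h | h <;> rw [h] <;> ring
    rw [hxs, hys, Real.sqrt_one, mul_one, mul_one]
  · apply Real.sInf_nonneg
    rintro s ⟨k, c, x, y, hx, hy, hA, rfl⟩
    exact Finset.sum_nonneg fun i _ => abs_nonneg _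
end
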